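/- Let R = Z[q^{±1}, A^{±1}] and for n ≥ 1 let I_n be the ideal of R generated by the elements {α+l; n} = ∏_{i=0}^{n−1}(A·q^{l−i} − A^{−1}·q^{−l+i}) for all l ∈ Z. Then ⋂_{n≥1} I_n = {0}; hence the canonical map R → lim_← R/I_n is injective. -/

import Mathlib

/-- The ring `R = ℤ[q^{±1}, A^{±1}]`, realized as the group algebra of `ℤ × ℤ` over `ℤ`,
where `q` corresponds to the first coordinate and `A` to the second. -/
abbrev TwoVarLaurent : Type := AddMonoidAlgebra ℤ (ℤ × ℤ)

/-- `q^m` in `ℤ[q^{±1}, A^{±1}]`. -/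
noncomputable def qpow (m : ℤ) : TwoVarLaurent := AddMonoidAlgebra.single (m, 0) 1

/-- `A^m` in `ℤ[q^{±1}, A^{±1}]`. -/
noncomputable def Apow (m : ℤ) : TwoVarLaurent := AddMonoidAlgebra.single (0, m) 1

/-- `{α+l; n} = ∏_{i=0}^{n−1} (A q^{l−i} − A^{−1} q^{−l+i})`. -/
noncomputable def braidProd (l : ℤ) (n : ℕ) : TwoVarLaurent :=
  ∏ i ∈ Finset.range n, (Apow 1 * qpow (l - i) - Apow (-1) * qpow (-l + i))

/-- The ideal `I_n` generated by the `{α+l; n}`, `l ∈ ℤ`. -/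
noncomputable def In (n : ℕ) : Ideal TwoVarLaurent :=
  Ideal.span { x | ∃ l : ℤ, x = braidProd l n }

open LaurentPolynomial

/-- The additive hom `(m, j) ↦ m + k * j`. -/
def fk (k : ℤ) : ℤ × ℤ →+ ℤ :=
  AddMonoidHom.mk' (fun p => p.1 + k * p.2) (by intro a b; simp; ring)

/-- The specialization `A ↦ q^k` : `ℤ[q^{±1},A^{±1}] → ℤ[q^{±1}]`. -/
noncomputable def psik (k : ℤ) : TwoVarLaurent →+* LaurentPolynomial ℤ :=
  AddMonoidAlgebra.mapDomainRingHom ℤ (fk k)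

lemma psik_single (k : ℤ) (p : ℤ × ℤ) (c : ℤ) :
    psik k (AddMonoidAlgebra.single p c) = AddMonoidAlgebra.single (p.1 + k * p.2) c := by
  show AddMonoidAlgebra.mapDomain (fk k) (AddMonoidAlgebra.single p c) = _
  rw [AddMonoidAlgebra.mapDomain_single]
  rfl

noncomputable instance : IsDomain (LaurentPolynomial ℤ) := NoZeroDivisors.to_isDomain _

instance : IsNoetherianRing (LaurentPolynomial ℤ) := by
  haveI := LaurentPolynomial.isLocalization (R := ℤ)
  exact IsLocalization.isNoetherianRing (Submonoid.powers (Polynomial.X : Polynomial ℤ)) _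
    inferInstance

lemma T2_dvd_pos {m : ℤ} (hm : 0 < m) :
    (T 2 - 1 : LaurentPolynomial ℤ) ∣ T (2 * m) - 1 := by
  lift m to ℕ using hm.le with n
  have h : (T (2 * (n : ℤ)) : LaurentPolynomial ℤ) = (T 2) ^ n := by
    rw [T_pow]; congr 1; ring
  rw [h]
  simpa using sub_dvd_pow_sub_pow (T 2 : LaurentPolynomial ℤ) 1 n

lemma T2_dvd {m : ℤ} (hm : m ≠ 0) :
    (T 2 - 1 : LaurentPolynomial ℤ) ∣ T m - T (-m) := by
  have key : ∀ m : ℤ, 0 < m → (T 2 - 1 : LaurentPolynomial ℤ) ∣ T m - T (-m) := by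
    intro m hm
    have h : (T m : LaurentPolynomial ℤ) - T (-m) = T (-m) * (T (2 * m) - 1) := by
      rw [mul_sub, mul_one, ← T_add]
      congr 2
      ring
    rw [h]
    exact Dvd.dvd.mul_left (T2_dvd_pos hm) _
  rcases hm.lt_or_gt with h | h
  · have := key (-m) (by omega)
    rw [neg_neg] at this
    have h2 := dvd_neg.2 this
    rwa [neg_sub] at h2
  · exact key m h

lemma psik_factor (k l : ℤ) (i : ℕ) :
    psik k (Apow 1 * qpow (l - i) - Apow (-1) * qpow (-l + i)) =
      T (l - i + k) - T (-(l - i + k)) := by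
  unfold Apow qpow
  rw [AddMonoidAlgebra.single_mul_single, AddMonoidAlgebra.single_mul_single, map_sub,
    psik_single, psik_single]
  show AddMonoidAlgebra.single ((0 + (l - i)) + k * (1 + 0)) ((1 : ℤ) * 1)
      - AddMonoidAlgebra.single ((0 + (-l + i)) + k * (-1 + 0)) ((1 : ℤ) * 1) = _
  have h1 : (0 + (l - i)) + k * (1 + 0) = l - i + k := by ring
  have h2 : (0 + (-l + i)) + k * (-1 + 0) = -(l - i + k) := by ring
  rw [h1, h2, mul_one]
  rfl

lemma psik_braidProd_mem (k l : ℤ) (n : ℕ) :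
    psik k (braidProd l n) ∈ Ideal.span {((T 2 - 1) ^ n : LaurentPolynomial ℤ)} := by
  rw [braidProd, map_prod]
  simp only [psik_factor]
  by_cases h : ∃ i ∈ Finset.range n, l - i + k = 0
  · obtain ⟨i, hi, hzero⟩ := h
    have : (T (l - i + k) : LaurentPolynomial ℤ) - T (-(l - i + k)) = 0 := by
      rw [hzero]; simp
    rw [Finset.prod_eq_zero hi this]
    exact Ideal.zero_mem _
  · push_neg at h
    rw [Ideal.mem_span_singleton]
    have : ((T 2 - 1 : LaurentPolynomial ℤ)) ^ n
        = ∏ _i ∈ Finset.range n, (T 2 - 1 : LaurentPolynomial ℤ) := by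
      rw [Finset.prod_const, Finset.card_range]
    rw [this]
    exact Finset.prod_dvd_prod_of_dvd _ _ (fun i hi => T2_dvd (h i hi))

lemma psik_In_mem (k : ℤ) {n : ℕ} {x : TwoVarLaurent} (hx : x ∈ In n) :
    psik k x ∈ Ideal.span {((T 2 - 1) ^ n : LaurentPolynomial ℤ)} := by
  have hmap : Ideal.map (psik k) (In n) ≤ Ideal.span {((T 2 - 1) ^ n : LaurentPolynomial ℤ)} := by
    rw [In, Ideal.map_span]
    apply Ideal.span_le.2
    rintro y ⟨z, ⟨l, rfl⟩, rfl⟩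
    exact psik_braidProd_mem k l n
  exact hmap (Ideal.mem_map_of_mem _ hx)

/-- The total-coefficient ring hom `ℤ[q^{±1}] → ℤ`, `T n ↦ 1`. -/
noncomputable def eps : LaurentPolynomial ℤ →ₐ[ℤ] ℤ :=
  (AddMonoidAlgebra.lift ℤ ℤ ℤ) 1

lemma eps_T (n : ℤ) : eps (T n) = 1 := by
  unfold eps
  show (AddMonoidAlgebra.lift ℤ ℤ ℤ) 1 (AddMonoidAlgebra.single n 1) = 1
  rw [AddMonoidAlgebra.lift_single]
  simp

lemma span_T2_ne_top : Ideal.span {(T 2 - 1 : LaurentPolynomial ℤ)} ≠ ⊤ := by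
  intro htop
  have h1 : (1 : LaurentPolynomial ℤ) ∈ Ideal.span {(T 2 - 1 : LaurentPolynomial ℤ)} := by
    rw [htop]; trivial
  rw [Ideal.mem_span_singleton] at h1
  have hu : IsUnit (T 2 - 1 : LaurentPolynomial ℤ) := isUnit_of_dvd_one h1
  have hu2 : IsUnit (eps (T 2 - 1)) := hu.map eps
  rw [map_sub, eps_T, map_one, sub_self] at hu2
  exact (by simp : ¬ IsUnit (0 : ℤ)) hu2

lemma eq_zero_of_mem_span_pow (y : LaurentPolynomial ℤ)
    (h : ∀ n : ℕ, 1 ≤ n → y ∈ Ideal.span {((T 2 - 1) ^ n : LaurentPolynomial ℤ)}) : y = 0 := by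
  have hbot : (⨅ n : ℕ, (Ideal.span {(T 2 - 1 : LaurentPolynomial ℤ)}) ^ n) = ⊥ :=
    Ideal.iInf_pow_eq_bot_of_isDomain _ span_T2_ne_top
  have hy : y ∈ (⨅ n : ℕ, (Ideal.span {(T 2 - 1 : LaurentPolynomial ℤ)}) ^ n) := by
    rw [Submodule.mem_iInf]
    intro n
    rcases Nat.eq_zero_or_pos n with rfl | hn
    · simp
    · rw [Ideal.span_singleton_pow]
      exact h n hn
  rw [hbot] at hy
  simpa using hy

lemma eq_zero_of_psik (x : TwoVarLaurent) (h : ∀ k : ℤ, psik k x = 0) : x = 0 := by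
  classical
  set M : ℕ := x.coeff.support.sup (fun p => p.1.natAbs) with hM
  set k : ℤ := 2 * M + 1 with hk
  have hinj : Set.InjOn (fk k) (x.coeff.support : Set (ℤ × ℤ)) := by
    rintro ⟨m, j⟩ hmj ⟨m', j'⟩ hmj' heq
    have heq' : m + k * j = m' + k * j' := heq
    have h1 : m.natAbs ≤ M := Finset.le_sup (f := fun p => p.1.natAbs) hmj
    have h2 : m'.natAbs ≤ M := Finset.le_sup (f := fun p => p.1.natAbs) hmj'
    have hm1 : |m| ≤ (M : ℤ) := by
      rw [Int.abs_eq_natAbs]; exact_mod_cast h1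
    have hm2 : |m'| ≤ (M : ℤ) := by
      rw [Int.abs_eq_natAbs]; exact_mod_cast h2
    have hj : j = j' := by
      by_contra hne
      have hkey : k * (j - j') = m' - m := by linarith
      have habs : (2 * M + 1 : ℤ) ≤ |k * (j - j')| := by
        rw [abs_mul]
        have hkabs : |k| = 2 * M + 1 := abs_of_pos (by positivity)
        have hjj : (1 : ℤ) ≤ |j - j'| := Int.one_le_abs (sub_ne_zero.2 hne)
        calc (2 * M + 1 : ℤ) = |k| * 1 := by rw [hkabs, mul_one]
          _ ≤ |k| * |j - j'| := by
            exact mul_le_mul_of_nonneg_left hjj (abs_nonneg _)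
      have hsmall : |m' - m| ≤ 2 * (M : ℤ) := by
        calc |m' - m| ≤ |m'| + |m| := abs_sub _ _
          _ ≤ 2 * (M : ℤ) := by linarith
      rw [hkey] at habs
      linarith
    subst hj
    have : m = m' := by linarith
    simp [this]
  have hmapinj := Finsupp.mapDomain_injOn (M := ℤ) (f := ⇑(fk k)) (x.coeff.support : Set (ℤ × ℤ)) hinj
  have h0 : Finsupp.mapDomain (fk k) x.coeff = Finsupp.mapDomain (fk k) (0 : TwoVarLaurent).coeff := by
    rw [AddMonoidAlgebra.coeff_zero, Finsupp.mapDomain_zero]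
    exact congrArg AddMonoidAlgebra.coeff (h k)
  exact AddMonoidAlgebra.coeff_injective (hmapinj (by simp) (by simp) h0)

/-- `⋂_{n ≥ 1} I_n = {0}` in `ℤ[q^{±1}, A^{±1}]`. -/
theorem stmt_2 : (⨅ n ∈ Set.Ici 1, In n) = ⊥ := by
  refine le_antisymm ?_ bot_le
  intro x hx
  have hx' : ∀ n : ℕ, n ∈ Set.Ici 1 → x ∈ In n := fun n hn =>
    Ideal.mem_iInf.1 (Ideal.mem_iInf.1 hx n) hn
  have key : ∀ k : ℤ, psik k x = 0 := by
    intro k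
    apply eq_zero_of_mem_span_pow
    intro n hn
    exact psik_In_mem k (hx' n hn)
  have : x = 0 := eq_zero_of_psik x key
  simp [this]
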